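/- Let G be a finite simple graph on a finite vertex type X. Define the graph G′ on the vertex type X ⊕ Bool, where: (inl x) is adjacent to (inl y) iff x is adjacent to y in G; the vertex u = inr true is adjacent to every vertex inl x (x ∈ X) and to v = inr false; and v = inr false is adjacent only to u. Then for every natural number α: G has a vertex cover of size at most α if and only if G′ has a vertex cover of size at most α + 1. -/

import Mathlib

/-- `C` is a vertex cover of `G`: every edge has at least one endpoint in `C`. -/
def IsVertexCover {V : Type*} (G : SimpleGraph V) (C : Set V) : Prop :=
  ∀ ⦃u v : V⦄, G.Adj u v → u ∈ C ∨ v ∈ C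

/-- The 'King-Maker' graph obtained from `G` by adding a king `inr true`
(adjacent to everything else) and a degree-one vertex `inr false`
(adjacent only to the king). -/
def kingMaker {X : Type*} (G : SimpleGraph X) : SimpleGraph (X ⊕ Bool) where
  Adj a b :=
    match a, b with
    | .inl x, .inl y => G.Adj x y
    | .inl _, .inr c => c = true
    | .inr b, .inl _ => b = true
    | .inr b, .inr c => b ≠ c
  symm := by
    refine ⟨?_⟩
    rintro (x | b) (y | c) h
    · exact G.adj_symm h
    · exact h
    · exact h
    · exact h.symm
  loopless := by
    refine ⟨?_⟩
    rintro (x | b) h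
    · exact G.irrefl h
    · exact h rfl

theorem stmt11 {X : Type*} [Fintype X] (G : SimpleGraph X) (α : ℕ) :
    (∃ C : Set X, IsVertexCover G C ∧ C.ncard ≤ α) ↔
    (∃ C' : Set (X ⊕ Bool), IsVertexCover (kingMaker G) C' ∧ C'.ncard ≤ α + 1) := by
  constructor
  · rintro ⟨C, hC, hcard⟩
    refine ⟨Sum.inl '' C ∪ {Sum.inr true}, ?_, ?_⟩
    · rintro (x | b) (y | c) h
      · rcases hC h with hx | hy
        · exact Or.inl (Or.inl ⟨x, hx, rfl⟩)
        · exact Or.inr (Or.inl ⟨y, hy, rfl⟩)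
      · simp only [kingMaker] at h
        subst h
        exact Or.inr (Or.inr rfl)
      · simp only [kingMaker] at h
        subst h
        exact Or.inl (Or.inr rfl)
      · simp only [kingMaker] at h
        rcases b with _ | _ <;> rcases c with _ | _ <;> simp_all
    · calc (Sum.inl '' C ∪ {Sum.inr true}).ncard
          ≤ (Sum.inl '' C : Set (X ⊕ Bool)).ncard + ({Sum.inr true} : Set (X ⊕ Bool)).ncard :=
            Set.ncard_union_le _ _
        _ = C.ncard + 1 := by
            rw [Set.ncard_image_of_injective _ Sum.inl_injective, Set.ncard_singleton]
        _ ≤ α + 1 := by omega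
  · rintro ⟨C', hC', hcard⟩
    refine ⟨Sum.inl ⁻¹' C', ?_, ?_⟩
    · intro x y h
      exact hC' (show (kingMaker G).Adj (Sum.inl x) (Sum.inl y) from h)
    · have hadj : (kingMaker G).Adj (Sum.inr true) (Sum.inr false) := by
        simp [kingMaker]
      obtain ⟨w, hw⟩ : ∃ w : Bool, Sum.inr w ∈ C' := by
        rcases hC' hadj with h | h
        · exact ⟨true, h⟩
        · exact ⟨false, h⟩
      have hsub : insert (Sum.inr w) (Sum.inl '' (Sum.inl ⁻¹' C')) ⊆ C' := by
        rintro a (rfl | ⟨x, hx, rfl⟩)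
        · exact hw
        · exact hx
      have hnotmem : Sum.inr w ∉ Sum.inl '' (Sum.inl ⁻¹' C') := by
        rintro ⟨x, _, hx⟩; exact Sum.inl_ne_inr hx
      have hfin : C'.Finite := Set.toFinite _
      have h1 : (insert (Sum.inr w) (Sum.inl '' (Sum.inl ⁻¹' C'))).ncard
          = (Sum.inl '' (Sum.inl ⁻¹' C')).ncard + 1 :=
        Set.ncard_insert_of_notMem hnotmem (Set.toFinite _)
      have h2 : (insert (Sum.inr w) (Sum.inl '' (Sum.inl ⁻¹' C'))).ncard ≤ C'.ncard :=
        Set.ncard_le_ncard hsub hfin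
      rw [Set.ncard_image_of_injective _ Sum.inl_injective] at h1
      omega
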